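/- arXiv:2105.09775 — 8 statements merged into one kernel-verified Lean document; each statement's English description precedes it below -/
import Mathlib

section
/- Let n, k be natural numbers with 1 ≤ k ≤ n, let A be an (n+1)×(n+1) complex matrix belonging to MD_{n,k}, and let m be a positive integer. Then A^m belongs to MD_{n,k}. -/
/-- `A` belongs to `MD_{n,k}`: `A i j = 0` whenever `|i - j|` is not a multiple of `k`. -/
def MD (n k : ℕ) (A : Matrix (Fin (n+1)) (Fin (n+1)) ℂ) : Prop :=
  ∀ i j : Fin (n+1), ¬ ((k : ℤ) ∣ (i : ℤ) - (j : ℤ)) → A i j = 0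

theorem stmt1 (n k : ℕ) (hk : 1 ≤ k) (hkn : k ≤ n)
    (A : Matrix (Fin (n+1)) (Fin (n+1)) ℂ) (hA : MD n k A)
    (m : ℕ) (hm : 1 ≤ m) :
    MD n k (A ^ m) := by
  clear hm
  induction m with
  | zero =>
    intro i j hij
    have hne : i ≠ j := by
      rintro rfl
      exact hij ⟨0, by ring⟩
    simp [Matrix.one_apply, hne]
  | succ m ih =>
    intro i j hij
    rw [pow_succ, Matrix.mul_apply]
    apply Finset.sum_eq_zero
    intro l _
    by_cases h : (k : ℤ) ∣ (i : ℤ) - (l : ℤ)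
    · have h2 : ¬ (k : ℤ) ∣ (l : ℤ) - (j : ℤ) := fun h2 => hij (by
        have := dvd_add h h2
        simpa using this)
      rw [hA l j h2, mul_zero]
    · rw [ih i l h, zero_mul]
end

section
/- Let n, k be natural numbers with 1 ≤ k ≤ n, and let A be an invertible (n+1)×(n+1) complex matrix belonging to MD_{n,k}. Then the inverse matrix A⁻¹ also belongs to MD_{n,k}. -/
/-- The MD matrices as a submodule. -/
noncomputable def MDsub (n k : ℕ) : Submodule ℂ (Matrix (Fin (n+1)) (Fin (n+1)) ℂ) where
  carrier := {A | MD n k A}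
  add_mem' := by
    intro A B hA hB i j h
    simp [Matrix.add_apply, hA i j h, hB i j h]
  zero_mem' := by intro i j h; simp
  smul_mem' := by
    intro c A hA i j h
    simp [Matrix.smul_apply, hA i j h]

lemma MD_mul (n k : ℕ) (A B : Matrix (Fin (n+1)) (Fin (n+1)) ℂ)
    (hA : MD n k A) (hB : MD n k B) : MD n k (A * B) := by
  intro i j h
  rw [Matrix.mul_apply]
  apply Finset.sum_eq_zero
  intro l _
  by_cases hl : (k : ℤ) ∣ (i : ℤ) - (l : ℤ)
  · have : ¬ ((k : ℤ) ∣ (l : ℤ) - (j : ℤ)) := by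
      intro hl2
      exact h (by have := dvd_add hl hl2; simpa using this)
    simp [hB l j this]
  · simp [hA i l hl]

lemma MD_one (n k : ℕ) : MD n k (1 : Matrix (Fin (n+1)) (Fin (n+1)) ℂ) := by
  intro i j h
  rcases eq_or_ne i j with rfl | hne
  · exact absurd (by simp) h
  · exact Matrix.one_apply_ne hne

theorem stmt2 (n k : ℕ) (hk : 1 ≤ k) (hkn : k ≤ n)
    (A : Matrix (Fin (n+1)) (Fin (n+1)) ℂ)
    (hA : MD n k A) (hU : IsUnit A) :
    MD n k A⁻¹ := by
  -- left multiplication by A on MDsub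
  let f : MDsub n k →ₗ[ℂ] MDsub n k :=
    { toFun := fun X => ⟨A * X.1, MD_mul n k A X.1 hA X.2⟩
      map_add' := by intro X Y; ext : 1; simp [Matrix.mul_add]
      map_smul' := by intro c X; ext : 1; simp [Matrix.mul_smul] }
  have hdet : IsUnit A.det := (Matrix.isUnit_iff_isUnit_det A).mp hU
  have hinj : Function.Injective f := by
    intro X Y hXY
    have h1 : A * X.1 = A * Y.1 := congrArg Subtype.val hXY
    have : A⁻¹ * (A * X.1) = A⁻¹ * (A * Y.1) := by rw [h1]
    rw [← Matrix.mul_assoc, ← Matrix.mul_assoc, Matrix.nonsing_inv_mul A hdet,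
      Matrix.one_mul, Matrix.one_mul] at this
    exact Subtype.ext this
  have hsurj : Function.Surjective f :=
    LinearMap.injective_iff_surjective.mp hinj
  obtain ⟨B, hB⟩ := hsurj ⟨1, MD_one n k⟩
  have hAB : A * B.1 = 1 := congrArg Subtype.val hB
  have : A⁻¹ = B.1 := Matrix.inv_eq_right_inv hAB
  rw [this]
  exact B.2
end

section
/- Let n, k be natural numbers with 1 ≤ k ≤ n, let A be an invertible (n+1)×(n+1) complex matrix belonging to MD_{n,k}, and let m be a positive integer. Then (A⁻¹)^m belongs to MD_{n,k}; that is, MD_{n,k} is closed under taking powers with negative exponents of its nonsingular elements. -/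
/-- The multidiagonal matrices form a subalgebra. -/
def mdSub (n k : ℕ) : Subalgebra ℂ (Matrix (Fin (n+1)) (Fin (n+1)) ℂ) where
  carrier := {A | MD n k A}
  mul_mem' := by
    intro A B hA hB
    intro i j hij
    rw [Matrix.mul_apply]
    apply Finset.sum_eq_zero
    intro l _
    by_cases h : (k : ℤ) ∣ (i : ℤ) - (l : ℤ)
    · have h2 : ¬ ((k : ℤ) ∣ (l : ℤ) - (j : ℤ)) := by
        intro h2
        exact hij (by have := dvd_add h h2; simpa using this)
      rw [hB l j h2, mul_zero]
    · rw [hA i l h, zero_mul]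
  one_mem' := by
    intro i j hij
    have hne : i ≠ j := by
      intro h; subst h; exact hij (by simp)
    simp [Matrix.one_apply_ne hne]
  add_mem' := by
    intro A B hA hB i j hij
    simp [Matrix.add_apply, hA i j hij, hB i j hij]
  zero_mem' := by intro i j hij; simp
  algebraMap_mem' := by
    intro c i j hij
    have hne : i ≠ j := by
      intro h; subst h; exact hij (by simp)
    simp [Matrix.algebraMap_matrix_apply, hne]

set_option synthInstance.maxHeartbeats 400000 in
theorem stmt3 (n k : ℕ) (hk : 1 ≤ k) (hkn : k ≤ n)
    (A : Matrix (Fin (n+1)) (Fin (n+1)) ℂ)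
    (hA : MD n k A) (hU : IsUnit A)
    (m : ℕ) (hm : 1 ≤ m) :
    MD n k (A⁻¹ ^ m) := by
  have hAmem : A ∈ mdSub n k := hA
  -- left multiplication by A on the subalgebra
  let a : mdSub n k := ⟨A, hAmem⟩
  let f : mdSub n k →ₗ[ℂ] mdSub n k := LinearMap.mulLeft ℂ a
  have hinj : Function.Injective f := by
    intro x y hxy
    have h1 : (A : Matrix (Fin (n+1)) (Fin (n+1)) ℂ) * (x : Matrix _ _ ℂ) = A * (y : Matrix _ _ ℂ) := by
      have := congrArg (Subtype.val) hxy
      simpa [f, a, LinearMap.mulLeft_apply] using this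
    have := congrArg (fun M => A⁻¹ * M) h1
    simp only [← Matrix.mul_assoc, Matrix.nonsing_inv_mul A
      ((Matrix.isUnit_iff_isUnit_det A).mp hU), Matrix.one_mul] at this
    exact Subtype.ext this
  have hsurj : Function.Surjective f :=
    (LinearMap.injective_iff_surjective).mp hinj
  obtain ⟨B, hB⟩ := hsurj 1
  have hAB : A * (B : Matrix (Fin (n+1)) (Fin (n+1)) ℂ) = 1 := by
    have := congrArg (Subtype.val) hB
    simpa [f, a, LinearMap.mulLeft_apply] using this
  have hinv : A⁻¹ = (B : Matrix (Fin (n+1)) (Fin (n+1)) ℂ) :=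
    Matrix.inv_eq_right_inv hAB
  have hinvmem : A⁻¹ ∈ mdSub n k := hinv ▸ B.2
  exact pow_mem hinvmem m
end

section
/- Let n, k be natural numbers with 1 ≤ k ≤ n, and let A be an invertible (n+1)×(n+1) complex k-tridiagonal matrix. Then the inverse matrix A⁻¹ belongs to MD_{n,k}; that is, (A⁻¹)_{ij} = 0 whenever |i−j| is not an integer multiple of k. -/
/-- `A` is `k`-tridiagonal: `A i j = 0` whenever `|i - j| ∉ {0, k}`. -/
def KTridiagonal (n k : ℕ) (A : Matrix (Fin (n+1)) (Fin (n+1)) ℂ) : Prop :=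
  ∀ i j : Fin (n+1), |(i : ℤ) - (j : ℤ)| ≠ 0 → |(i : ℤ) - (j : ℤ)| ≠ k → A i j = 0

theorem stmt4 (n k : ℕ) (hk : 1 ≤ k) (hkn : k ≤ n)
    (A : Matrix (Fin (n+1)) (Fin (n+1)) ℂ)
    (hA : KTridiagonal n k A) (hU : IsUnit A) :
    MD n k A⁻¹ := by
  have hk0 : k ≠ 0 := by omega
  set ω : ℂ := Complex.exp (2 * Real.pi * Complex.I / k) with hωdef
  have hω : IsPrimitiveRoot ω k := Complex.isPrimitiveRoot_exp k hk0
  have hωk : ω ^ k = 1 := hω.pow_eq_one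
  have hωne : ω ≠ 0 := Complex.exp_ne_zero _
  set D : Matrix (Fin (n+1)) (Fin (n+1)) ℂ :=
    Matrix.diagonal (fun i : Fin (n+1) => ω ^ (i : ℕ)) with hD
  have hcomm : D * A = A * D := by
    ext i j
    rw [hD, Matrix.diagonal_mul, Matrix.mul_diagonal]
    by_cases h : A i j = 0
    · simp [h]
    · have hij : |(i : ℤ) - (j : ℤ)| = 0 ∨ |(i : ℤ) - (j : ℤ)| = k := by
        by_contra hc
        push_neg at hc
        exact h (hA i j hc.1 hc.2)
      rcases hij with h1 | h1
      · have h1' := abs_eq_zero.mp h1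
        have : (i : ℤ) = (j : ℤ) := by omega
        have : (i : ℕ) = (j : ℕ) := by exact_mod_cast this
        rw [this, mul_comm]
      · rcases abs_eq (by positivity : (0:ℤ) ≤ k) |>.mp h1 with h2 | h2
        · -- i = j + k
          have : (i : ℕ) = (j : ℕ) + k := by omega
          rw [this, pow_add, hωk, mul_one, mul_comm]
        · -- j = i + k
          have : (j : ℕ) = (i : ℕ) + k := by omega
          rw [this, pow_add, hωk, mul_one, mul_comm]
  have hdet : IsUnit A.det := (Matrix.isUnit_iff_isUnit_det A).mp hU
  have hAAi : A * A⁻¹ = 1 := Matrix.mul_nonsing_inv A hdet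
  have hAiA : A⁻¹ * A = 1 := Matrix.nonsing_inv_mul A hdet
  have hcomm' : D * A⁻¹ = A⁻¹ * D := by
    calc D * A⁻¹ = A⁻¹ * (A * D) * A⁻¹ := by rw [← mul_assoc, hAiA, one_mul]
    _ = A⁻¹ * (D * A) * A⁻¹ := by rw [hcomm]
    _ = A⁻¹ * D * (A * A⁻¹) := by simp [mul_assoc]
    _ = A⁻¹ * D := by rw [hAAi, mul_one]
  intro i j hdvd
  by_contra hne
  have hentry : ω ^ (i : ℕ) * A⁻¹ i j = A⁻¹ i j * ω ^ (j : ℕ) := by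
    have := congrFun (congrFun hcomm' i) j
    rwa [hD, Matrix.diagonal_mul, Matrix.mul_diagonal] at this
  have hpow : ω ^ (i : ℕ) = ω ^ (j : ℕ) := by
    rw [mul_comm (A⁻¹ i j)] at hentry
    exact mul_right_cancel₀ hne hentry
  have hzpow : ω ^ ((i : ℤ) - (j : ℤ)) = 1 := by
    rw [zpow_sub₀ hωne, zpow_natCast, zpow_natCast, hpow, div_self (pow_ne_zero _ hωne)]
  exact hdvd ((hω.zpow_eq_one_iff_dvd _).mp hzpow)
end

section
/- Let n, k be natural numbers with 1 ≤ k ≤ n and n+1 ≤ 2k, and let A be an invertible (n+1)×(n+1) complex k-tridiagonal matrix. Then the inverse matrix A⁻¹ is also k-tridiagonal; that is, (A⁻¹)_{ij} = 0 whenever |i−j| ∉ {0, k}. -/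
/-- The subalgebra of `k`-tridiagonal matrices, assuming `n + 1 ≤ 2 * k`. -/
def kTriSubalgebra (n k : ℕ) (h2k : n + 1 ≤ 2 * k) :
    Subalgebra ℂ (Matrix (Fin (n+1)) (Fin (n+1)) ℂ) where
  carrier := {M | KTridiagonal n k M}
  add_mem' := by
    intro a b ha hb i j h0 hk'
    simp [Matrix.add_apply, ha i j h0 hk', hb i j h0 hk']
  zero_mem' := by intro i j _ _; rfl
  algebraMap_mem' := by
    intro c i j h0 _
    have hij : i ≠ j := by
      intro h; subst h; simp at h0
    simp [Matrix.algebraMap_eq_diagonal, Matrix.diagonal_apply_ne _ hij]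
  mul_mem' := by
    intro a b ha hb i j h0 hk'
    rw [Matrix.mul_apply]
    apply Finset.sum_eq_zero
    intro l _
    rcases eq_or_ne (a i l) 0 with h | h
    · simp [h]
    rcases eq_or_ne (b l j) 0 with h' | h'
    · simp [h']
    exfalso
    have hil : |(i : ℤ) - (l : ℤ)| = 0 ∨ |(i : ℤ) - (l : ℤ)| = k := by
      by_contra hc
      push_neg at hc
      exact h (ha i l hc.1 hc.2)
    have hlj : |(l : ℤ) - (j : ℤ)| = 0 ∨ |(l : ℤ) - (j : ℤ)| = k := by
      by_contra hc
      push_neg at hc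
      exact h' (hb l j hc.1 hc.2)
    have hi : ((i : ℕ) : ℤ) < n + 1 := by exact_mod_cast i.isLt
    have hj : ((j : ℕ) : ℤ) < n + 1 := by exact_mod_cast j.isLt
    have hl : ((l : ℕ) : ℤ) < n + 1 := by exact_mod_cast l.isLt
    rcases abs_cases ((i : ℤ) - (l : ℤ)) with ⟨e1, _⟩ | ⟨e1, _⟩ <;>
    rcases abs_cases ((l : ℤ) - (j : ℤ)) with ⟨e2, _⟩ | ⟨e2, _⟩ <;>
    rcases abs_cases ((i : ℤ) - (j : ℤ)) with ⟨e3, _⟩ | ⟨e3, _⟩ <;>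
      rw [e1] at hil <;> rw [e2] at hlj <;> rw [e3] at h0 hk' <;>
      omega

theorem stmt5 (n k : ℕ) (hk : 1 ≤ k) (hkn : k ≤ n) (h2k : n + 1 ≤ 2 * k)
    (A : Matrix (Fin (n+1)) (Fin (n+1)) ℂ)
    (hA : KTridiagonal n k A) (hU : IsUnit A) :
    KTridiagonal n k A⁻¹ := by
  set S := kTriSubalgebra n k h2k
  have hAS : A ∈ S := hA
  -- the constant coefficient of the characteristic polynomial is nonzero
  have hdet : A.det ≠ 0 := by
    have := (Matrix.isUnit_iff_isUnit_det A).mp hU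
    exact this.ne_zero
  set c₀ : ℂ := A.charpoly.coeff 0 with hc₀
  have hc0ne : c₀ ≠ 0 := by
    intro h
    apply hdet
    rw [Matrix.det_eq_sign_charpoly_coeff, ← hc₀, h, mul_zero]
  -- Cayley–Hamilton: A * aeval A (divX charpoly) = -c₀ • 1
  set B : Matrix (Fin (n+1)) (Fin (n+1)) ℂ := Polynomial.aeval A A.charpoly.divX with hB
  have hCH : Polynomial.aeval A A.charpoly = 0 := Matrix.aeval_self_charpoly A
  have key : A * B + c₀ • (1 : Matrix (Fin (n+1)) (Fin (n+1)) ℂ) = 0 := by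
    have := congrArg (Polynomial.aeval A) (Polynomial.X_mul_divX_add A.charpoly)
    rw [map_add, map_mul, Polynomial.aeval_X, Polynomial.aeval_C, hCH] at this
    rw [hB, ← this]
    congr 1
    simp [Algebra.algebraMap_eq_smul_one]
    exact hc₀
  have hAB : A * B = (-c₀) • (1 : Matrix (Fin (n+1)) (Fin (n+1)) ℂ) := by
    rw [neg_smul]
    exact eq_neg_of_add_eq_zero_left key
  have hABeq : A * ((-c₀)⁻¹ • B) = 1 := by
    rw [Matrix.mul_smul, hAB, ← smul_assoc, smul_eq_mul,
      inv_mul_cancel₀ (neg_ne_zero.mpr hc0ne), one_smul]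
  have hinv : A⁻¹ = (-c₀)⁻¹ • B := Matrix.inv_eq_right_inv hABeq
  have hBmem : B ∈ S := by
    have : B ∈ Algebra.adjoin ℂ ({A} : Set (Matrix (Fin (n+1)) (Fin (n+1)) ℂ)) := by
      rw [Algebra.adjoin_singleton_eq_range_aeval]
      exact ⟨A.charpoly.divX, rfl⟩
    exact Algebra.adjoin_le (Set.singleton_subset_iff.mpr hAS) this
  have : A⁻¹ ∈ S := by
    rw [hinv]
    exact S.smul_mem hBmem _
  exact this
end

section
/- Let n, k be natural numbers with 1 ≤ k ≤ n and n+1 ≤ 2k. Let a_0,...,a_{n−k}, b_0,...,b_n, c_0,...,c_{n−k} be complex numbers and let A be the (n+1)×(n+1) k-tridiagonal matrix with A_{j+k,j} = a_j and A_{j,j+k} = c_j for j = 0,...,n−k, A_{jj} = b_j for j = 0,...,n, and all other entries zero. Then A is nonsingular (invertible) if and only if b_j ≠ 0 for every j with n+1−k ≤ j ≤ k−1 and b_j·b_{j+k} − a_j·c_j ≠ 0 for every j with 0 ≤ j ≤ n−k. -/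
theorem stmt6 (n k : ℕ) (hk : 1 ≤ k) (hkn : k ≤ n) (h2k : n + 1 ≤ 2 * k)
    (a b c : ℕ → ℂ)
    (A : Matrix (Fin (n+1)) (Fin (n+1)) ℂ)
    (hA : A = Matrix.of fun i j : Fin (n+1) =>
      if (i : ℕ) = (j : ℕ) then b i
      else if (i : ℕ) = (j : ℕ) + k then a j
      else if (j : ℕ) = (i : ℕ) + k then c i
      else 0) :
    IsUnit A ↔
      ((∀ j : ℕ, n + 1 - k ≤ j → j ≤ k - 1 → b j ≠ 0) ∧
       (∀ j : ℕ, j ≤ n - k → b j * b (j + k) - a j * c j ≠ 0)) := by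
  rw [Matrix.isUnit_iff_isUnit_det, isUnit_iff_ne_zero]
  constructor
  · intro hdet
    constructor
    · intro j hj1 hj2 hb
      apply hdet
      rw [← Matrix.exists_mulVec_eq_zero_iff]
      have hjn : j < n + 1 := by omega
      refine ⟨Pi.single ⟨j, hjn⟩ 1, ?_, ?_⟩
      · intro h
        have := congrFun h ⟨j, hjn⟩
        simp at this
      · rw [Matrix.mulVec_single]
        funext i
        have hi := i.isLt
        simp only [hA, Pi.smul_apply, Matrix.col_apply, op_smul_eq_mul, Matrix.of_apply, Pi.zero_apply]
        split_ifs with h1 h2 h3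
        · rw [show (i : ℕ) = j from h1, hb, zero_mul]
        · omega
        · omega
        · ring
    · intro j hj hd
      apply hdet
      have hjk : j + k < n + 1 := by omega
      have hjn : j < n + 1 := by omega
      set p : Fin (n+1) := ⟨j, hjn⟩ with hp
      set q : Fin (n+1) := ⟨j + k, hjk⟩ with hq
      set M : Matrix (Fin 2) (Fin 2) ℂ := !![b j, c j; a j, b (j + k)] with hM
      have hMdet : M.det = 0 := by
        simp [hM, Matrix.det_fin_two_of]
        linear_combination hd
      obtain ⟨v, hv0, hv⟩ := Matrix.exists_mulVec_eq_zero_iff.mpr hMdet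
      have e0 : b j * v 0 + c j * v 1 = 0 := by
        have := congrFun hv 0
        simpa [hM, Matrix.mulVec, dotProduct, Fin.sum_univ_two, Matrix.vecHead, Matrix.vecTail] using this
      have e1 : a j * v 0 + b (j + k) * v 1 = 0 := by
        have := congrFun hv 1
        simpa [hM, Matrix.mulVec, dotProduct, Fin.sum_univ_two, Matrix.vecHead, Matrix.vecTail] using this
      rw [← Matrix.exists_mulVec_eq_zero_iff]
      refine ⟨Pi.single p (v 0) + Pi.single q (v 1), ?_, ?_⟩
      · intro h
        apply hv0
        have hpq : p ≠ q := by
          intro h'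
          have := congrArg (Fin.val) h'
          simp [hp, hq] at this
          omega
        have h0 := congrFun h p
        have h1 := congrFun h q
        simp [Pi.single_apply, hpq, hpq.symm] at h0 h1
        funext i
        fin_cases i <;> simpa
      · rw [Matrix.mulVec_add, Matrix.mulVec_single, Matrix.mulVec_single]
        funext i
        have hi := i.isLt
        simp only [hA, Pi.smul_apply, Matrix.col_apply, op_smul_eq_mul, Matrix.of_apply, Pi.add_apply, Pi.zero_apply, hp, hq]
        by_cases hij : (i : ℕ) = j
        · rw [if_pos hij]
          rw [if_neg (by omega), if_neg (by omega), if_pos (by omega)]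
          rw [show b (i:ℕ) = b j by rw [hij], show c (i:ℕ) = c j by rw [hij]]
          linear_combination e0
        · rw [if_neg hij]
          by_cases hij2 : (i : ℕ) = j + k
          · rw [if_pos hij2, if_pos (by omega)]
            rw [show b (i:ℕ) = b (j + k) by rw [hij2]]
            linear_combination e1
          · rw [if_neg hij2, if_neg (by omega), if_neg (by omega), if_neg (by omega),
              if_neg (by omega)]
            ring
  · rintro ⟨h1, h2⟩ hdet
    rw [← Matrix.exists_mulVec_eq_zero_iff] at hdet
    obtain ⟨v, hv0, hv⟩ := hdet
    apply hv0
    have row : ∀ i : Fin (n+1), ∑ m : Fin (n+1), A i m * v m = 0 := by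
      intro i
      have := congrFun hv i
      simpa [Matrix.mulVec, dotProduct] using this
    have claim : ∀ (j : ℕ) (hj : j ≤ n - k), v ⟨j, by omega⟩ = 0 ∧ v ⟨j + k, by omega⟩ = 0 := by
      intro j hj
      have hjk : j + k < n + 1 := by omega
      have hjn : j < n + 1 := by omega
      set p : Fin (n+1) := ⟨j, hjn⟩ with hp
      set q : Fin (n+1) := ⟨j + k, hjk⟩ with hq
      have hpq : p ≠ q := by
        intro h'
        have := congrArg (Fin.val) h'
        simp [hp, hq] at this
        omega
      have eq1 : b j * v p + c j * v q = 0 := by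
        have h := row p
        rw [Finset.sum_eq_add_of_mem p q (Finset.mem_univ _) (Finset.mem_univ _) hpq ?_] at h
        · have hApp : A p p = b j := by simp [hA, hp]
          have hApq : A p q = c j := by
            simp only [hA, Matrix.of_apply, hp, hq, Fin.val_mk]
            rw [if_neg (show ¬ j = j + k by omega), if_neg (show ¬ j = j + k + k by omega)]
            simp
          rw [hApp, hApq] at h
          exact h
        · intro m hm ⟨hmp, hmq⟩
          have hm1 : (m : ℕ) ≠ j := fun h' => hmp (Fin.ext h')
          have hm2 : (m : ℕ) ≠ j + k := fun h' => hmq (Fin.ext h')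
          simp only [hA, Matrix.of_apply, hp, Fin.val_mk]
          rw [if_neg (show ¬ j = (m:ℕ) by omega), if_neg (show ¬ j = (m:ℕ) + k by omega),
            if_neg (show ¬ (m:ℕ) = j + k by omega), zero_mul]
      have eq2 : a j * v p + b (j + k) * v q = 0 := by
        have h := row q
        rw [Finset.sum_eq_add_of_mem p q (Finset.mem_univ _) (Finset.mem_univ _) hpq ?_] at h
        · have hAqp : A q p = a j := by
            simp only [hA, Matrix.of_apply, hp, hq, Fin.val_mk]
            rw [if_neg (show ¬ j + k = j by omega)]
            simp
          have hAqq : A q q = b (j + k) := by simp [hA, hq]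
          rw [hAqp, hAqq] at h
          exact h
        · intro m hm ⟨hmp, hmq⟩
          have hmlt := m.isLt
          have hm1 : (m : ℕ) ≠ j := fun h' => hmp (Fin.ext h')
          have hm2 : (m : ℕ) ≠ j + k := fun h' => hmq (Fin.ext h')
          simp only [hA, Matrix.of_apply, hq, Fin.val_mk]
          rw [if_neg (show ¬ j + k = (m:ℕ) by omega), if_neg (show ¬ j + k = (m:ℕ) + k by omega),
            if_neg (show ¬ (m:ℕ) = j + k + k by omega), zero_mul]
      have hd := h2 j hj
      constructor
      · have : (b j * b (j + k) - a j * c j) * v p = 0 := by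
          linear_combination b (j + k) * eq1 - c j * eq2
        exact (mul_eq_zero.mp this).resolve_left hd
      · have : (b j * b (j + k) - a j * c j) * v q = 0 := by
          linear_combination b j * eq2 - a j * eq1
        exact (mul_eq_zero.mp this).resolve_left hd
    funext i
    have hi := i.isLt
    by_cases hc1 : (i : ℕ) ≤ n - k
    · have := (claim (i : ℕ) hc1).1
      simpa using this
    · by_cases hc2 : k ≤ (i : ℕ)
      · have := (claim ((i : ℕ) - k) (by omega)).2
        have heq : (⟨(i : ℕ) - k + k, by omega⟩ : Fin (n+1)) = i := Fin.ext (by simp only [Fin.val_mk]; omega)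
        rw [heq] at this
        simpa using this
      · -- middle case
        have h := row i
        rw [Finset.sum_eq_single_of_mem i (Finset.mem_univ _) ?_] at h
        · have hAii : A i i = b (i : ℕ) := by simp [hA]
          rw [hAii] at h
          have hb := h1 (i : ℕ) (by omega) (by omega)
          simpa using (mul_eq_zero.mp h).resolve_left hb
        · intro m hm hmi
          have hmlt := m.isLt
          have hm1 : (i : ℕ) ≠ (m : ℕ) := fun h' => hmi (Fin.ext h'.symm)
          simp only [hA, Matrix.of_apply]
          rw [if_neg hm1, if_neg (by omega), if_neg (by omega), zero_mul]
end

section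
/- Let n, k be natural numbers with 1 ≤ k ≤ n and n+1 ≤ 2k. Let a_0,...,a_{n−k}, b_0,...,b_n, c_0,...,c_{n−k} be complex numbers and let A be the (n+1)×(n+1) k-tridiagonal matrix with A_{j+k,j} = a_j and A_{j,j+k} = c_j for j = 0,...,n−k, A_{jj} = b_j for j = 0,...,n, and all other entries zero. Then det A = (∏_{j=n+1−k}^{k−1} b_j) · (∏_{j=0}^{n−k} (b_j·b_{j+k} − a_j·c_j)). -/
theorem stmt7 (n k : ℕ) (hk : 1 ≤ k) (hkn : k ≤ n) (h2k : n + 1 ≤ 2 * k)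
    (a b c : ℕ → ℂ)
    (A : Matrix (Fin (n+1)) (Fin (n+1)) ℂ)
    (hA : A = Matrix.of fun i j : Fin (n+1) =>
      if (i : ℕ) = (j : ℕ) then b i
      else if (i : ℕ) = (j : ℕ) + k then a j
      else if (j : ℕ) = (i : ℕ) + k then c i
      else 0) :
    A.det = (∏ j ∈ Finset.Icc (n + 1 - k) (k - 1), b j) *
      ∏ j ∈ Finset.Icc 0 (n - k), (b j * b (j + k) - a j * c j) := by
  subst hA
  set m := n + 1 - k with hm'
  set s := 2 * k - (n + 1) with hs'
  have hmk : m ≤ k := by omega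
  have hms : m + s = k := by omega
  have hmn : m + k = n + 1 := by omega
  -- the reindexing function
  have hik : ∀ i : Fin 2, (i : ℕ) * k ≤ k := by
    intro i
    have : (i : ℕ) ≤ 1 := by omega
    calc (i : ℕ) * k ≤ 1 * k := Nat.mul_le_mul_right k this
    _ = k := one_mul k
  let f : (Fin 2 × Fin m) ⊕ Fin s → Fin (n+1) :=
    fun x => match x with
    | .inl (i, j) => ⟨(j : ℕ) + (i : ℕ) * k, by have := hik i; have := j.2; omega⟩
    | .inr t => ⟨m + (t : ℕ), by have := t.2; omega⟩
  have hfl : ∀ (i : Fin 2) (j : Fin m), (f (.inl (i, j)) : ℕ) = (j : ℕ) + (i : ℕ) * k :=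
    fun i j => rfl
  have hfr : ∀ t : Fin s, (f (.inr t) : ℕ) = m + (t : ℕ) := fun t => rfl
  have hfinj : Function.Injective f := by
    rintro (⟨i₁, j₁⟩ | t₁) (⟨i₂, j₂⟩ | t₂) h <;>
      rw [Fin.ext_iff] at h
    · rw [hfl, hfl] at h
      have hj₁ := j₁.2; have hj₂ := j₂.2
      have hi₁ : (i₁ : ℕ) = 0 ∨ (i₁ : ℕ) = 1 := by omega
      have hi₂ : (i₂ : ℕ) = 0 ∨ (i₂ : ℕ) = 1 := by omega
      have : (i₁ : ℕ) = (i₂ : ℕ) ∧ (j₁ : ℕ) = (j₂ : ℕ) := by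
        rcases hi₁ with h1 | h1 <;> rcases hi₂ with h2 | h2 <;>
          rw [h1, h2] at h <;> simp at h <;> omega
      simp only [Sum.inl.injEq, Prod.mk.injEq]
      exact ⟨Fin.ext this.1, Fin.ext this.2⟩
    · rw [hfl, hfr] at h
      have := j₁.2; have := t₂.2
      have hi₁ : (i₁ : ℕ) = 0 ∨ (i₁ : ℕ) = 1 := by omega
      exfalso; rcases hi₁ with h1 | h1 <;> rw [h1] at h <;> simp at h <;> omega
    · rw [hfr, hfl] at h
      have := j₂.2; have := t₁.2
      have hi₂ : (i₂ : ℕ) = 0 ∨ (i₂ : ℕ) = 1 := by omega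
      exfalso; rcases hi₂ with h1 | h1 <;> rw [h1] at h <;> simp at h <;> omega
    · rw [hfr, hfr] at h
      simp only [Sum.inr.injEq]
      exact Fin.ext (by omega)
  have hfbij : Function.Bijective f := by
    rw [Fintype.bijective_iff_injective_and_card]
    refine ⟨hfinj, ?_⟩
    simp only [Fintype.card_sum, Fintype.card_prod, Fintype.card_fin]
    omega
  let e := Equiv.ofBijective f hfbij
  set M := (Matrix.of fun i j : Fin (n+1) =>
      if (i : ℕ) = (j : ℕ) then b i
      else if (i : ℕ) = (j : ℕ) + k then a j
      else if (j : ℕ) = (i : ℕ) + k then c i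
      else 0) with hM
  have key : M.submatrix e e = Matrix.fromBlocks
      (Matrix.blockDiagonal (fun j : Fin m => !![b j, c j; a j, b ((j : ℕ) + k)]))
      0 0 (Matrix.diagonal (fun t : Fin s => b (m + (t : ℕ)))) := by
    ext x y
    have hMe : ∀ u v : Fin (n+1), M u v =
        (if (u : ℕ) = (v : ℕ) then b u
        else if (u : ℕ) = (v : ℕ) + k then a v
        else if (v : ℕ) = (u : ℕ) + k then c u
        else 0) := fun u v => rfl
    rcases x with ⟨i₁, j₁⟩ | t₁ <;> rcases y with ⟨i₂, j₂⟩ | t₂ <;>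
      simp only [Matrix.submatrix_apply, Equiv.ofBijective_apply, e,
        Matrix.fromBlocks_apply₁₁, Matrix.fromBlocks_apply₁₂,
        Matrix.fromBlocks_apply₂₁, Matrix.fromBlocks_apply₂₂,
        Matrix.blockDiagonal_apply, Matrix.diagonal_apply, Matrix.zero_apply,
        hMe, hfl, hfr]
    · -- pair/pair
      have hj₁ := j₁.2; have hj₂ := j₂.2
      have hi₁ : i₁ = 0 ∨ i₁ = 1 := by omega
      have hi₂ : i₂ = 0 ∨ i₂ = 1 := by omega
      rcases hi₁ with h1 | h1 <;> rcases hi₂ with h2 | h2 <;> subst h1 <;> subst h2 <;>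
        simp only [Fin.isValue, Fin.val_zero, Fin.val_one, zero_mul, one_mul, add_zero,
          Fin.ext_iff] <;>
        split_ifs <;>
        first
          | rfl
          | (exfalso; omega)
          | (simp only [Fin.isValue, Matrix.cons_val', Matrix.cons_val_zero,
              Matrix.cons_val_one, Matrix.head_cons, Matrix.head_fin_const,
              Matrix.empty_val', Matrix.cons_val_fin_one, Matrix.of_apply]
             first | rfl | (congr 1; omega))
    · -- pair/single
      have hj₁ := j₁.2; have ht₂ := t₂.2
      have hi₁ : (i₁ : ℕ) = 0 ∨ (i₁ : ℕ) = 1 := by omega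
      rcases hi₁ with h1 | h1 <;> rw [h1] <;> repeat rw [if_neg (by omega)]
    · -- single/pair
      have hj₂ := j₂.2; have ht₁ := t₁.2
      have hi₂ : (i₂ : ℕ) = 0 ∨ (i₂ : ℕ) = 1 := by omega
      rcases hi₂ with h1 | h1 <;> rw [h1] <;> repeat rw [if_neg (by omega)]
    · -- single/single
      have ht₁ := t₁.2; have ht₂ := t₂.2
      by_cases hte : t₁ = t₂
      · subst hte; simp
      · have hne : (t₁ : ℕ) ≠ (t₂ : ℕ) := fun hc => hte (Fin.ext hc)
        rw [if_neg hte]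
        repeat rw [if_neg (by omega)]
  have hdet : M.det = (M.submatrix e e).det := (Matrix.det_submatrix_equiv_self e M).symm
  rw [hdet, key, Matrix.det_fromBlocks_zero₂₁, Matrix.det_blockDiagonal,
    Matrix.det_diagonal]
  have h1 : ∀ j : Fin m, (!![b j, c j; a j, b ((j : ℕ) + k)]).det
      = b j * b ((j : ℕ) + k) - a j * c j := by
    intro j; rw [Matrix.det_fin_two_of]; ring
  rw [Finset.prod_congr rfl (fun j _ => h1 j)]
  have h2 : ∏ j : Fin m, (b (j : ℕ) * b ((j : ℕ) + k) - a (j : ℕ) * c (j : ℕ))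
      = ∏ j ∈ Finset.Icc 0 (n - k), (b j * b (j + k) - a j * c j) := by
    rw [Fin.prod_univ_eq_prod_range (fun j => b j * b (j + k) - a j * c j) m]
    congr 1
    ext x; simp [Finset.mem_range, Finset.mem_Icc]; omega
  have h3 : ∏ t : Fin s, b (m + (t : ℕ)) = ∏ j ∈ Finset.Icc (n + 1 - k) (k - 1), b j := by
    rw [Fin.prod_univ_eq_prod_range (fun t => b (m + t)) s]
    have hset : Finset.Icc (n + 1 - k) (k - 1)
        = (Finset.range s).map ⟨fun t => m + t, add_right_injective m⟩ := by
      ext x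
      simp only [Finset.mem_Icc, Finset.mem_map, Finset.mem_range,
        Function.Embedding.coeFn_mk]
      constructor
      · intro hx; exact ⟨x - m, by omega, by omega⟩
      · rintro ⟨t, ht, rfl⟩; omega
    rw [hset, Finset.prod_map]
    rfl
  rw [h2, h3, mul_comm]
end

section
/- Let n, k be natural numbers with 1 ≤ k ≤ n and n+1 ≤ 2k. Let a_0,...,a_{n−k}, b_0,...,b_n, c_0,...,c_{n−k} be complex numbers satisfying b_j ≠ 0 for every j with n+1−k ≤ j ≤ k−1 and b_j·b_{j+k} − a_j·c_j ≠ 0 for every j with 0 ≤ j ≤ n−k, and let A be the (n+1)×(n+1) k-tridiagonal matrix with A_{j+k,j} = a_j and A_{j,j+k} = c_j for j = 0,...,n−k, A_{jj} = b_j for j = 0,...,n, and all other entries zero. Then A is invertible and its inverse X = A⁻¹ is the k-tridiagonal matrix with entries: X_{j+k,j} = −a_j/(b_j·b_{j+k} − a_j·c_j) for j = 0,...,n−k; X_{j,j+k} = −c_j/(b_j·b_{j+k} − a_j·c_j) for j = 0,...,n−k; X_{jj} = b_{j+k}/(b_j·b_{j+k} − a_j·c_j) for j = 0,...,n−k; X_{jj}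 = 1/b_j for j = n+1−k,...,k−1; X_{jj} = b_{j−k}/(b_{j−k}·b_j − a_{j−k}·c_{j−k}) for j = k,...,n; and X_{ij} = 0 whenever |i−j| ∉ {0, k}. -/
theorem stmt8 (n k : ℕ) (hk : 1 ≤ k) (hkn : k ≤ n) (h2k : n + 1 ≤ 2 * k)
    (a b c : ℕ → ℂ)
    (hb : ∀ j : ℕ, n + 1 - k ≤ j → j ≤ k - 1 → b j ≠ 0)
    (habc : ∀ j : ℕ, j ≤ n - k → b j * b (j + k) - a j * c j ≠ 0)
    (A : Matrix (Fin (n+1)) (Fin (n+1)) ℂ)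
    (hA : A = Matrix.of fun i j : Fin (n+1) =>
      if (i : ℕ) = (j : ℕ) then b i
      else if (i : ℕ) = (j : ℕ) + k then a j
      else if (j : ℕ) = (i : ℕ) + k then c i
      else 0) :
    IsUnit A ∧
    A⁻¹ = Matrix.of fun i j : Fin (n+1) =>
      if (i : ℕ) = (j : ℕ) then
        (if (i : ℕ) + k ≤ n then b ((i : ℕ) + k) / (b i * b ((i : ℕ) + k) - a i * c i)
         else if k ≤ (i : ℕ) then
           b ((i : ℕ) - k) / (b ((i : ℕ) - k) * b i - a ((i : ℕ) - k) * c ((i : ℕ) - k))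
         else 1 / b i)
      else if (i : ℕ) = (j : ℕ) + k then
        -a j / (b j * b ((j : ℕ) + k) - a j * c j)
      else if (j : ℕ) = (i : ℕ) + k then
        -c i / (b i * b ((i : ℕ) + k) - a i * c i)
      else 0 := by
  set X : Matrix (Fin (n+1)) (Fin (n+1)) ℂ := Matrix.of fun i j : Fin (n+1) =>
      if (i : ℕ) = (j : ℕ) then
        (if (i : ℕ) + k ≤ n then b ((i : ℕ) + k) / (b i * b ((i : ℕ) + k) - a i * c i)
         else if k ≤ (i : ℕ) then
           b ((i : ℕ) - k) / (b ((i : ℕ) - k) * b i - a ((i : ℕ) - k) * c ((i : ℕ) - k))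
         else 1 / b i)
      else if (i : ℕ) = (j : ℕ) + k then
        -a j / (b j * b ((j : ℕ) + k) - a j * c j)
      else if (j : ℕ) = (i : ℕ) + k then
        -c i / (b i * b ((i : ℕ) + k) - a i * c i)
      else 0 with hXdef
  have key : A * X = 1 := by
    ext i j
    rw [Matrix.mul_apply, Matrix.one_apply]
    by_cases h1 : (i : ℕ) + k ≤ n
    · have hik : (i : ℕ) < k := by omega
      set i' : Fin (n+1) := ⟨(i : ℕ) + k, by omega⟩ with hi'
      have hii' : i ≠ i' := by
        intro h
        have := congrArg Fin.val h
        simp [hi'] at this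
        omega
      rw [Fintype.sum_eq_add i i' hii' ?_]
      · have hAii : A i i = b i := by simp [hA]
        have hAii' : A i i' = c i := by
          rw [hA]
          simp only [Matrix.of_apply, hi']
          rw [if_neg (by omega), if_neg (by omega)]
          simp
        rw [hAii, hAii']
        have hD := habc i (by omega)
        simp only [hXdef, Matrix.of_apply, hi']
        by_cases hji : (j : ℕ) = (i : ℕ)
        · have hij : i = j := Fin.ext hji.symm
          rw [if_pos hij]
          rw [if_pos hji.symm, if_pos h1]
          rw [if_neg (by omega), if_pos (by omega : ((i : ℕ) + k) = (j : ℕ) + k)]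
          rw [hji]
          field_simp
          ring
        · rw [if_neg (fun h => hji (congrArg Fin.val h).symm)]
          by_cases hji' : (j : ℕ) = (i : ℕ) + k
          · rw [if_neg (by omega), if_neg (by omega), if_pos hji']
            rw [if_pos hji'.symm, if_neg (by omega), if_pos (by omega)]
            rw [show (i : ℕ) + k - k = (i : ℕ) from by omega]
            field_simp
            ring
          · rw [if_neg (by omega), if_neg (by omega), if_neg (fun h => hji' h),
              if_neg (by omega), if_neg (by omega), if_neg (by omega)]
            ring
      · intro x ⟨hx1, hx2⟩
        have hxv1 : (x : ℕ) ≠ (i : ℕ) := fun h => hx1 (Fin.ext h)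
        have hxv2 : (x : ℕ) ≠ (i : ℕ) + k := fun h => hx2 (Fin.ext (by simp [hi', h]))
        have : A i x = 0 := by
          rw [hA]
          simp only [Matrix.of_apply]
          rw [if_neg (by omega), if_neg (by omega), if_neg (by omega)]
        rw [this, zero_mul]
    · by_cases h2 : k ≤ (i : ℕ)
      · set m := (i : ℕ) - k with hm
        have hmn : m ≤ n - k := by omega
        have him : (i : ℕ) = m + k := by omega
        set i' : Fin (n+1) := ⟨m, by omega⟩ with hi'
        have hii' : i ≠ i' := by
          intro h
          have := congrArg Fin.val h
          simp [hi'] at this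
          omega
        rw [Fintype.sum_eq_add i i' hii' ?_]
        · have hAii : A i i = b i := by simp [hA]
          have hAii' : A i i' = a m := by
            rw [hA]
            simp only [Matrix.of_apply, hi']
            rw [if_neg (by omega), if_pos (by omega)]
          rw [hAii, hAii']
          have hD := habc m hmn
          simp only [hXdef, Matrix.of_apply, hi']
          by_cases hji : (j : ℕ) = (i : ℕ)
          · have hij : i = j := Fin.ext hji.symm
            rw [if_pos hij]
            rw [if_pos hji.symm, if_neg (by omega), if_pos h2]
            rw [if_neg (by omega), if_neg (by omega), if_pos (by omega)]
            rw [him]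
            simp only [Nat.add_sub_cancel]
            have hD' : b (m + k) * b m - a m * c m ≠ 0 := by rw [mul_comm (b (m + k))]; exact hD
            field_simp
            ring
          · rw [if_neg (fun h => hji (congrArg Fin.val h).symm)]
            by_cases hjm : (j : ℕ) = m
            · rw [if_neg (by omega), if_pos (by omega), if_pos hjm.symm, if_pos (by omega)]
              rw [hjm, him]
              field_simp
              ring
            · rw [if_neg (by omega), if_neg (by omega), if_neg (by omega),
                if_neg (by omega), if_neg (by omega), if_neg (by omega)]
              ring
        · intro x ⟨hx1, hx2⟩
          have hxv1 : (x : ℕ) ≠ (i : ℕ) := fun h => hx1 (Fin.ext h)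
          have hxv2 : (x : ℕ) ≠ m := fun h => hx2 (Fin.ext (by simp [hi', h]))
          have : A i x = 0 := by
            rw [hA]
            simp only [Matrix.of_apply]
            rw [if_neg (by omega), if_neg (by omega), if_neg (by omega)]
          rw [this, zero_mul]
      · have hbi := hb i (by omega) (by omega)
        rw [Fintype.sum_eq_single i ?_]
        · have hAii : A i i = b i := by simp [hA]
          rw [hAii]
          simp only [hXdef, Matrix.of_apply]
          by_cases hji : (j : ℕ) = (i : ℕ)
          · rw [if_pos (Fin.ext hji.symm), if_pos hji.symm, if_neg h1, if_neg h2]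
            field_simp
          · rw [if_neg (fun h => hji (congrArg Fin.val h).symm),
              if_neg (fun h => hji h.symm), if_neg (by omega), if_neg (by omega)]
            ring
        · intro x hx
          have hxv1 : (x : ℕ) ≠ (i : ℕ) := fun h => hx (Fin.ext h)
          have : A i x = 0 := by
            rw [hA]
            simp only [Matrix.of_apply]
            rw [if_neg (by omega), if_neg (by omega), if_neg (by omega)]
          rw [this, zero_mul]
  exact ⟨(Matrix.isUnit_iff_isUnit_det _).2 (Matrix.isUnit_det_of_right_inverse key),
    Matrix.inv_eq_right_inv key⟩
end
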